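/- arXiv:2204.13770 — 2 statements merged into one kernel-verified Lean document; each statement's English description precedes it below -/
import Mathlib

section
/- Let V be a 4-dimensional real vector space with a neutral scalar product g, let I be a complex structure on V compatible with g, let X ∈ V be a nonzero null vector, and let U ∈ V be a null vector with g(X,U)=0 and g(IX,U) ≠ 0. Then span{X,IX}, span{X,U} and span{IX,IU} are pairwise distinct 2-dimensional totally isotropic subspaces of V; moreover, every 2-dimensional totally isotropic subspace of V containing X equals span{X,IX} or span{X,U}, and every 2-dimensional totally isotropic subspace of V containing IX equals span{X,IX} or span{IX,IU}. -/
open Module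

/-- A neutral scalar product on a real vector space: a bilinear form admitting a basis
`(e₀,e₁,e₂,e₃)` that is `g`-orthogonal with `g(e₀,e₀)=g(e₁,e₁)=1`, `g(e₂,e₂)=g(e₃,e₃)=-1`
(so in particular the space is 4-dimensional and `g` is symmetric, nondegenerate of
signature (2,2)). -/
def IsNeutral {V : Type*} [AddCommGroup V] [Module ℝ V]
    (g : V →ₗ[ℝ] V →ₗ[ℝ] ℝ) : Prop :=
  ∃ e : Basis (Fin 4) ℝ V,
    (∀ i j, i ≠ j → g (e i) (e j) = 0) ∧
    g (e 0) (e 0) = 1 ∧ g (e 1) (e 1) = 1 ∧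
    g (e 2) (e 2) = -1 ∧ g (e 3) (e 3) = -1

/-- `W` is a 2-dimensional totally isotropic subspace for `g` (a null 2-plane). -/
def IsNullPlane {V : Type*} [AddCommGroup V] [Module ℝ V]
    (g : V →ₗ[ℝ] V →ₗ[ℝ] ℝ) (W : Submodule ℝ V) : Prop :=
  finrank ℝ W = 2 ∧ ∀ u ∈ W, ∀ v ∈ W, g u v = 0

lemma range_pair {V : Type*} [AddCommGroup V] [Module ℝ V] (a b : V) :
    (Set.range ![a, b] : Set V) = {a, b} := by
  ext x; simp [Matrix.range_cons, Matrix.range_empty]; tauto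

lemma range_triple {V : Type*} [AddCommGroup V] [Module ℝ V] (a b c : V) :
    (Set.range ![a, b, c] : Set V) = {a, b, c} := by
  ext x; simp [Matrix.range_cons, Matrix.range_empty]; tauto

lemma finrank_span_pair {V : Type*} [AddCommGroup V] [Module ℝ V] {a b : V}
    (h : ∀ s t : ℝ, s • a + t • b = 0 → s = 0 ∧ t = 0) :
    finrank ℝ (Submodule.span ℝ ({a, b} : Set V)) = 2 := by
  have hli : LinearIndependent ℝ ![a, b] := LinearIndependent.pair_iff.mpr h
  have := finrank_span_eq_card hli
  rwa [range_pair, Fintype.card_fin] at this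

/-- Lemma `beta-planes`: given a nonzero null vector `X` and a null vector `U` with
`g(X,U) = 0`, `g(IX,U) ≠ 0`, the planes `span{X,IX}`, `span{X,U}` and `span{IX,IU}` are
pairwise distinct null 2-planes; every null 2-plane containing `X` is `span{X,IX}` or
`span{X,U}`, and every null 2-plane containing `IX` is `span{X,IX}` or `span{IX,IU}`. -/
theorem null_planes_through_X {V : Type*} [AddCommGroup V] [Module ℝ V]
    (g : V →ₗ[ℝ] V →ₗ[ℝ] ℝ) (hg : IsNeutral g)
    (I : V →ₗ[ℝ] V) (hI : ∀ v, I (I v) = -v)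
    (hIg : ∀ u v, g (I u) (I v) = g u v)
    (X : V) (hX : X ≠ 0) (hXnull : g X X = 0)
    (U : V) (hUnull : g U U = 0) (hXU : g X U = 0) (hIXU : g (I X) U ≠ 0) :
    IsNullPlane g (Submodule.span ℝ {X, I X}) ∧
    IsNullPlane g (Submodule.span ℝ {X, U}) ∧
    IsNullPlane g (Submodule.span ℝ {I X, I U}) ∧
    Submodule.span ℝ {X, I X} ≠ Submodule.span ℝ {X, U} ∧
    Submodule.span ℝ {X, I X} ≠ Submodule.span ℝ {I X, I U} ∧
    Submodule.span ℝ {X, U} ≠ Submodule.span ℝ {I X, I U} ∧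
    (∀ W : Submodule ℝ V, IsNullPlane g W → X ∈ W →
      W = Submodule.span ℝ {X, I X} ∨ W = Submodule.span ℝ {X, U}) ∧
    (∀ W : Submodule ℝ V, IsNullPlane g W → I X ∈ W →
      W = Submodule.span ℝ {X, I X} ∨ W = Submodule.span ℝ {I X, I U}) := by
  obtain ⟨e, horth, he0, he1, he2, he3⟩ := hg
  haveI : FiniteDimensional ℝ V := Module.Finite.of_basis e
  have hdim : finrank ℝ V = 4 := by
    rw [finrank_eq_card_basis e, Fintype.card_fin]
  -- symmetry of g
  have hsymm : ∀ u v, g u v = g v u := by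
    have hflip : g = g.flip := by
      apply e.ext; intro i; apply e.ext; intro j
      simp only [LinearMap.flip_apply]
      rcases eq_or_ne i j with h | h
      · rw [h]
      · rw [horth i j h, horth j i h.symm]
    intro u v
    calc g u v = g.flip v u := rfl
    _ = g v u := by rw [← hflip]
  -- basic products
  have hIXIX : g (I X) (I X) = 0 := by rw [hIg]; exact hXnull
  have hXIX : g X (I X) = 0 := by
    have h1 : g (I X) (I (I X)) = g X (I X) := hIg X (I X)
    rw [hI X, map_neg] at h1
    have h2 := hsymm (I X) X
    linarith
  have hIXX : g (I X) X = 0 := by rw [hsymm]; exact hXIX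
  have hUIU : g U (I U) = 0 := by
    have h1 : g (I U) (I (I U)) = g U (I U) := hIg U (I U)
    rw [hI U, map_neg] at h1
    have h2 := hsymm (I U) U
    linarith
  have hIUU : g (I U) U = 0 := by rw [hsymm]; exact hUIU
  have hIUIU : g (I U) (I U) = 0 := by rw [hIg]; exact hUnull
  have hIXIU : g (I X) (I U) = 0 := by rw [hIg]; exact hXU
  have hIUIX : g (I U) (I X) = 0 := by rw [hsymm]; exact hIXIU
  have hXIU : g X (I U) = -g (I X) U := by
    have h1 : g (I X) (I (I U)) = g X (I U) := hIg X (I U)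
    rw [hI U, map_neg] at h1
    linarith
  have hIUX : g (I U) X = -g (I X) U := by rw [hsymm]; exact hXIU
  have hUX : g U X = 0 := by rw [hsymm]; exact hXU
  have hUIX : g U (I X) = g (I X) U := hsymm U (I X)
  -- triple independence X, IX, U
  have htriple : ∀ a b c : ℝ, a • X + b • I X + c • U = 0 → a = 0 ∧ b = 0 ∧ c = 0 := by
    intro a b c h
    have h1 : g (I X) (a • X + b • I X + c • U) = 0 := by rw [h]; simp
    simp only [map_add, map_smul, hIXX, hIXIX, smul_eq_mul, mul_zero, zero_add] at h1
    have hc : c = 0 := by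
      rcases mul_eq_zero.mp h1 with h' | h'
      · exact h'
      · exact absurd h' hIXU
    subst hc
    have h2 : g (a • X + b • I X + (0:ℝ) • U) U = 0 := by rw [h]; simp
    simp only [map_add, map_smul, LinearMap.add_apply, LinearMap.smul_apply,
      hXU, hIXX, smul_eq_mul, mul_zero, zero_smul, zero_add, add_zero] at h2
    have hb : b = 0 := by
      rcases mul_eq_zero.mp h2 with h' | h'
      · exact h'
      · exact absurd h' hIXU
    subst hb
    simp only [zero_smul, add_zero] at h
    rcases smul_eq_zero.mp h with h' | h'
    · exact ⟨h', rfl, rfl⟩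
    · exact absurd h' hX
  have htriple' : ∀ a b c : ℝ, a • X + b • I X + c • I U = 0 → a = 0 ∧ b = 0 ∧ c = 0 := by
    intro a b c h
    have h1 : I (a • X + b • I X + c • I U) = 0 := by rw [h]; simp
    simp only [map_add, map_smul, hI] at h1
    have h2 : (-b) • X + a • I X + (-c) • U = 0 := by
      rw [← h1]; simp [smul_neg, neg_smul]; abel
    obtain ⟨hb, ha, hc⟩ := htriple _ _ _ h2
    exact ⟨ha, by linarith, by linarith⟩
  -- kernels
  have hXdual : (g X : Module.Dual ℝ V) ≠ 0 := by
    intro h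
    have : g X (I U) = 0 := by rw [h]; rfl
    rw [hXIU] at this
    exact hIXU (by linarith)
  have hIXdual : (g (I X) : Module.Dual ℝ V) ≠ 0 := by
    intro h
    have : g (I X) U = 0 := by rw [h]; rfl
    exact hIXU this
  have hkerX : finrank ℝ (LinearMap.ker (g X)) = 3 := by
    have := Module.Dual.finrank_ker_add_one_of_ne_zero hXdual
    omega
  have hkerIX : finrank ℝ (LinearMap.ker (g (I X))) = 3 := by
    have := Module.Dual.finrank_ker_add_one_of_ne_zero hIXdual
    omega
  have hspan3 : Submodule.span ℝ ({X, I X, U} : Set V) = LinearMap.ker (g X) := by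
    apply Submodule.eq_of_le_of_finrank_le
    · rw [Submodule.span_le]
      rintro v hv
      simp only [Set.mem_insert_iff, Set.mem_singleton_iff] at hv
      rcases hv with rfl | rfl | rfl
      · exact LinearMap.mem_ker.mpr hXnull
      · exact LinearMap.mem_ker.mpr hXIX
      · exact LinearMap.mem_ker.mpr hXU
    · have hli : LinearIndependent ℝ ![X, I X, U] := by
        rw [Fintype.linearIndependent_iff]
        intro f hf
        rw [Fin.sum_univ_three] at hf
        simp only [Matrix.cons_val_zero, Matrix.cons_val_one, Matrix.head_cons,
          Matrix.cons_val_two, Matrix.tail_cons] at hf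
        obtain ⟨h1, h2, h3⟩ := htriple _ _ _ hf
        intro i; fin_cases i <;> assumption
      have h3 := finrank_span_eq_card hli
      rw [range_triple, Fintype.card_fin] at h3
      rw [h3, hkerX]
  have hspan3' : Submodule.span ℝ ({X, I X, I U} : Set V) = LinearMap.ker (g (I X)) := by
    apply Submodule.eq_of_le_of_finrank_le
    · rw [Submodule.span_le]
      rintro v hv
      simp only [Set.mem_insert_iff, Set.mem_singleton_iff] at hv
      rcases hv with rfl | rfl | rfl
      · exact LinearMap.mem_ker.mpr hIXX
      · exact LinearMap.mem_ker.mpr hIXIX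
      · exact LinearMap.mem_ker.mpr hIXIU
    · have hli : LinearIndependent ℝ ![X, I X, I U] := by
        rw [Fintype.linearIndependent_iff]
        intro f hf
        rw [Fin.sum_univ_three] at hf
        simp only [Matrix.cons_val_zero, Matrix.cons_val_one, Matrix.head_cons,
          Matrix.cons_val_two, Matrix.tail_cons] at hf
        obtain ⟨h1, h2, h3⟩ := htriple' _ _ _ hf
        intro i; fin_cases i <;> assumption
      have h3 := finrank_span_eq_card hli
      rw [range_triple, Fintype.card_fin] at h3
      rw [h3, hkerIX]
  -- pair independences
  have hpXIX : ∀ s t : ℝ, s • X + t • I X = 0 → s = 0 ∧ t = 0 := by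
    intro s t h
    have := htriple s t 0 (by rw [zero_smul, add_zero]; exact h)
    exact ⟨this.1, this.2.1⟩
  have hpXU : ∀ s t : ℝ, s • X + t • U = 0 → s = 0 ∧ t = 0 := by
    intro s t h
    have := htriple s 0 t (by rw [zero_smul, add_zero]; exact h)
    exact ⟨this.1, this.2.2⟩
  have hpIXIU : ∀ s t : ℝ, s • I X + t • I U = 0 → s = 0 ∧ t = 0 := by
    intro s t h
    have := htriple' 0 s t (by rw [zero_smul, zero_add]; exact h)
    exact ⟨this.2.1, this.2.2⟩
  -- finranks of the three spans
  have hfr1 : finrank ℝ (Submodule.span ℝ ({X, I X} : Set V)) = 2 := finrank_span_pair hpXIX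
  have hfr2 : finrank ℝ (Submodule.span ℝ ({X, U} : Set V)) = 2 := finrank_span_pair hpXU
  have hfr3 : finrank ℝ (Submodule.span ℝ ({I X, I U} : Set V)) = 2 := finrank_span_pair hpIXIU
  -- isotropy
  have hiso : ∀ a b : V, g a a = 0 → g a b = 0 → g b a = 0 → g b b = 0 →
      ∀ u ∈ Submodule.span ℝ ({a, b} : Set V), ∀ v ∈ Submodule.span ℝ ({a, b} : Set V),
      g u v = 0 := by
    intro a b h1 h2 h3 h4 u hu v hv
    rw [Submodule.mem_span_pair] at hu hv
    obtain ⟨s, t, rfl⟩ := hu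
    obtain ⟨p, q, rfl⟩ := hv
    simp [map_add, map_smul, LinearMap.add_apply, LinearMap.smul_apply, h1, h2, h3, h4]
  -- non-memberships
  have hUnot : U ∉ Submodule.span ℝ ({X, I X} : Set V) := by
    intro h
    rw [Submodule.mem_span_pair] at h
    obtain ⟨s, t, h⟩ := h
    apply hIXU
    rw [← hUIX, ← h]
    simp [map_add, map_smul, hIXX, hIXIX, hXIX, hUIX]
  have hXnot : X ∉ Submodule.span ℝ ({I X, I U} : Set V) := by
    intro h
    rw [Submodule.mem_span_pair] at h
    obtain ⟨a, b, h⟩ := h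
    have h1 := congrArg (fun v => (g v) U) h
    simp only [map_add, map_smul, LinearMap.add_apply, LinearMap.smul_apply,
      smul_eq_mul, hIUU, mul_zero, add_zero, hXU] at h1
    have ha : a = 0 := by
      rcases mul_eq_zero.mp h1 with h' | h'
      · exact h'
      · exact absurd h' hIXU
    have h2 := congrArg (fun v => (g v) (I U)) h
    simp only [map_add, map_smul, LinearMap.add_apply, LinearMap.smul_apply,
      smul_eq_mul, hIXIU, hIUIU, ha, mul_zero, add_zero, zero_mul, zero_add] at h2
    rw [hXIU] at h2
    exact hIXU (by linarith)
  refine ⟨⟨hfr1, hiso X (I X) hXnull hXIX hIXX hIXIX⟩,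
    ⟨hfr2, hiso X U hXnull hXU hUX hUnull⟩,
    ⟨hfr3, hiso (I X) (I U) hIXIX hIXIU hIUIX hIUIU⟩, ?_, ?_, ?_, ?_, ?_⟩
  · intro h
    apply hUnot
    rw [h]
    exact Submodule.subset_span (by simp)
  · intro h
    apply hXnot
    rw [← h]
    exact Submodule.subset_span (by simp)
  · intro h
    apply hXnot
    rw [← h]
    exact Submodule.subset_span (by simp)
  -- classification through X
  · rintro W ⟨hW2, hWiso⟩ hXW
    have hdec : ∀ w ∈ W, ∃ a b c : ℝ, w = a • X + (b • I X + c • U) ∧ b * c = 0 := by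
      intro w hw
      have hk : w ∈ LinearMap.ker (g X) := LinearMap.mem_ker.mpr (hWiso X hXW w hw)
      rw [← hspan3] at hk
      rw [show ({X, I X, U} : Set V) = insert X {I X, U} from rfl,
        Submodule.mem_span_insert] at hk
      obtain ⟨a, z, hz, rfl⟩ := hk
      rw [Submodule.mem_span_pair] at hz
      obtain ⟨b, c, rfl⟩ := hz
      refine ⟨a, b, c, rfl, ?_⟩
      have h0 : g (a • X + (b • I X + c • U)) (a • X + (b • I X + c • U)) = 0 :=
        hWiso _ hw _ hw
      simp only [map_add, map_smul, LinearMap.add_apply, LinearMap.smul_apply,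
        hXnull, hXIX, hXU, hIXX, hIXIX, hUX, hUIX, hUnull, smul_eq_mul,
        mul_zero, add_zero, zero_add] at h0
      have h2 : (b * c + c * b) * g (I X) U = 0 := by ring_nf; ring_nf at h0; linarith
      rcases mul_eq_zero.mp h2 with h' | h'
      · linarith
      · exact absurd h' hIXU
    by_cases hall : ∀ w ∈ W, w ∈ Submodule.span ℝ ({X, I X} : Set V)
    · left
      exact Submodule.eq_of_le_of_finrank_le hall (by rw [hfr1, hW2])
    · right
      push_neg at hall
      obtain ⟨w, hw, hwn⟩ := hall
      obtain ⟨a, b, c, hwdef, hbc⟩ := hdec w hw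
      have hc : c ≠ 0 := by
        rintro rfl
        apply hwn
        rw [hwdef, zero_smul, add_zero]
        exact Submodule.mem_span_pair.mpr ⟨a, b, rfl⟩
      have hb : b = 0 := by
        rcases mul_eq_zero.mp hbc with h' | h'
        · exact h'
        · exact absurd h' hc
      have hUW : U ∈ W := by
        have hsub : w - a • X ∈ W := W.sub_mem hw (W.smul_mem a hXW)
        have heq : c⁻¹ • (w - a • X) = U := by
          rw [hwdef, hb, zero_smul, zero_add, add_sub_cancel_left, smul_smul,
            inv_mul_cancel₀ hc, one_smul]
        rw [← heq]
        exact W.smul_mem _ hsub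
      have hle : Submodule.span ℝ ({X, U} : Set V) ≤ W := by
        rw [Submodule.span_le]
        rintro v hv
        simp only [Set.mem_insert_iff, Set.mem_singleton_iff] at hv
        rcases hv with rfl | rfl
        · exact hXW
        · exact hUW
      exact (Submodule.eq_of_le_of_finrank_le hle (by rw [hfr2, hW2])).symm
  -- classification through I X
  · rintro W ⟨hW2, hWiso⟩ hIXW
    have hdec : ∀ w ∈ W, ∃ a b c : ℝ, w = a • X + (b • I X + c • I U) ∧ a * c = 0 := by
      intro w hw
      have hk : w ∈ LinearMap.ker (g (I X)) := LinearMap.mem_ker.mpr (hWiso (I X) hIXW w hw)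
      rw [← hspan3'] at hk
      rw [show ({X, I X, I U} : Set V) = insert X {I X, I U} from rfl,
        Submodule.mem_span_insert] at hk
      obtain ⟨a, z, hz, rfl⟩ := hk
      rw [Submodule.mem_span_pair] at hz
      obtain ⟨b, c, rfl⟩ := hz
      refine ⟨a, b, c, rfl, ?_⟩
      have h0 : g (a • X + (b • I X + c • I U)) (a • X + (b • I X + c • I U)) = 0 :=
        hWiso _ hw _ hw
      simp only [map_add, map_smul, LinearMap.add_apply, LinearMap.smul_apply,
        hXnull, hXIX, hXIU, hIXX, hIXIX, hIXIU, hIUX, hIUIX, hIUIU, smul_eq_mul,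
        mul_zero, add_zero, zero_add] at h0
      have h2 : (a * c + c * a) * g (I X) U = 0 := by ring_nf; ring_nf at h0; linarith
      rcases mul_eq_zero.mp h2 with h' | h'
      · linarith
      · exact absurd h' hIXU
    by_cases hall : ∀ w ∈ W, w ∈ Submodule.span ℝ ({X, I X} : Set V)
    · left
      exact Submodule.eq_of_le_of_finrank_le hall (by rw [hfr1, hW2])
    · right
      push_neg at hall
      obtain ⟨w, hw, hwn⟩ := hall
      obtain ⟨a, b, c, hwdef, hac⟩ := hdec w hw
      have hc : c ≠ 0 := by
        rintro rfl
        apply hwn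
        rw [hwdef, zero_smul, add_zero]
        exact Submodule.mem_span_pair.mpr ⟨a, b, rfl⟩
      have ha : a = 0 := by
        rcases mul_eq_zero.mp hac with h' | h'
        · exact h'
        · exact absurd h' hc
      have hIUW : I U ∈ W := by
        have hsub : w - b • I X ∈ W := W.sub_mem hw (W.smul_mem b hIXW)
        have heq : c⁻¹ • (w - b • I X) = I U := by
          rw [hwdef, ha, zero_smul, zero_add, add_sub_cancel_left, smul_smul,
            inv_mul_cancel₀ hc, one_smul]
        rw [← heq]
        exact W.smul_mem _ hsub
      have hle : Submodule.span ℝ ({I X, I U} : Set V) ≤ W := by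
        rw [Submodule.span_le]
        rintro v hv
        simp only [Set.mem_insert_iff, Set.mem_singleton_iff] at hv
        rcases hv with rfl | rfl
        · exact hIXW
        · exact hIUW
      exact (Submodule.eq_of_le_of_finrank_le hle (by rw [hfr3, hW2])).symm
end

section
/- Let V be a 4-dimensional real vector space with a neutral scalar product g, and let X ∈ V be a nonzero null vector. Then there exist exactly two 2-dimensional totally isotropic subspaces of V containing X. -/
open Module

section NullPlaneAux

variable {V : Type*} [AddCommGroup V] [Module ℝ V]

/-- The linear combination `a e₀ + b e₁ + c e₂ + d e₃`. -/
noncomputable def nCombo (e : Basis (Fin 4) ℝ V) (a b c d : ℝ) : V :=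
  a • e 0 + b • e 1 + c • e 2 + d • e 3

/-- The vector corresponding to the rank-one matrix `p qᵀ` in the matrix model of the
neutral space. -/
noncomputable def nOuter (e : Basis (Fin 4) ℝ V) (p1 p2 q1 q2 : ℝ) : V :=
  nCombo e ((p1*q1+p2*q2)/2) ((p2*q1-p1*q2)/2) ((p1*q1-p2*q2)/2) ((-(p1*q2)-p2*q1)/2)

lemma nCombo_repr (e : Basis (Fin 4) ℝ V) (v : V) :
    v = nCombo e (e.repr v 0) (e.repr v 1) (e.repr v 2) (e.repr v 3) := by
  have h := e.sum_repr v
  rw [Fin.sum_univ_four] at h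
  exact h.symm

lemma nCombo_eq_zero (e : Basis (Fin 4) ℝ V) {a b c d : ℝ}
    (h : nCombo e a b c d = 0) : a = 0 ∧ b = 0 ∧ c = 0 ∧ d = 0 := by
  refine ⟨?_, ?_, ?_, ?_⟩
  · have := congrArg (fun v => e.repr v 0) h
    simpa [nCombo, Finsupp.single_apply] using this
  · have := congrArg (fun v => e.repr v 1) h
    simpa [nCombo, Finsupp.single_apply] using this
  · have := congrArg (fun v => e.repr v 2) h
    simpa [nCombo, Finsupp.single_apply] using this
  · have := congrArg (fun v => e.repr v 3) h
    simpa [nCombo, Finsupp.single_apply] using this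

lemma nCombo_inj (e : Basis (Fin 4) ℝ V) {a b c d a' b' c' d' : ℝ}
    (h : nCombo e a b c d = nCombo e a' b' c' d') :
    a = a' ∧ b = b' ∧ c = c' ∧ d = d' := by
  have h' : nCombo e (a - a') (b - b') (c - c') (d - d') = 0 := by
    have : nCombo e (a - a') (b - b') (c - c') (d - d')
        = nCombo e a b c d - nCombo e a' b' c' d' := by
      simp only [nCombo]; module
    rw [this, h, sub_self]
  obtain ⟨e1, e2, e3, e4⟩ := nCombo_eq_zero e h'
  exact ⟨by linarith, by linarith, by linarith, by linarith⟩

lemma nOuter_qcomb (e : Basis (Fin 4) ℝ V) (p1 p2 s t : ℝ) :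
    s • nOuter e p1 p2 1 0 + t • nOuter e p1 p2 0 1 = nOuter e p1 p2 s t := by
  simp only [nOuter, nCombo]; module

lemma nOuter_pcomb (e : Basis (Fin 4) ℝ V) (q1 q2 s t : ℝ) :
    s • nOuter e 1 0 q1 q2 + t • nOuter e 0 1 q1 q2 = nOuter e s t q1 q2 := by
  simp only [nOuter, nCombo]; module

lemma nOuter_smul_left (e : Basis (Fin 4) ℝ V) (p1 p2 q1 q2 t : ℝ) :
    nOuter e (t*p1) (t*p2) q1 q2 = t • nOuter e p1 p2 q1 q2 := by
  simp only [nOuter, nCombo]; module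

lemma nOuter_smul_right (e : Basis (Fin 4) ℝ V) (p1 p2 q1 q2 t : ℝ) :
    nOuter e p1 p2 (t*q1) (t*q2) = t • nOuter e p1 p2 q1 q2 := by
  simp only [nOuter, nCombo]; module

lemma nOuter_eq_zero (e : Basis (Fin 4) ℝ V) {p1 p2 q1 q2 : ℝ}
    (h : nOuter e p1 p2 q1 q2 = 0) :
    p1*q1 = 0 ∧ p2*q2 = 0 ∧ p1*q2 = 0 ∧ p2*q1 = 0 := by
  obtain ⟨e1, e2, e3, e4⟩ := nCombo_eq_zero e h
  exact ⟨by linarith, by linarith, by linarith, by linarith⟩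

lemma nOuter_inj (e : Basis (Fin 4) ℝ V) {p1 p2 q1 q2 r1 r2 s1 s2 : ℝ}
    (h : nOuter e p1 p2 q1 q2 = nOuter e r1 r2 s1 s2) :
    p1*q1 = r1*s1 ∧ p2*q2 = r2*s2 ∧ p1*q2 = r1*s2 ∧ p2*q1 = r2*s1 := by
  obtain ⟨e1, e2, e3, e4⟩ := nCombo_inj e h
  exact ⟨by linarith, by linarith, by linarith, by linarith⟩

/-- Two-dimensional proportionality from a vanishing cross product. -/
lemma nProp {p1 p2 r1 r2 : ℝ} (hp : p1 ≠ 0 ∨ p2 ≠ 0) (h : p1*r2 - p2*r1 = 0) :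
    ∃ t, r1 = t*p1 ∧ r2 = t*p2 := by
  rcases hp with hp | hp
  · exact ⟨r1/p1, by field_simp, by field_simp; linarith⟩
  · exact ⟨r2/p2, by field_simp; linarith, by field_simp⟩

/-- Outer-product decomposition of a singular 2×2 matrix. -/
lemma nOp {x y z w : ℝ} (hdet : x*y + z*w = 0) (hnz : ¬(x = 0 ∧ y = 0 ∧ z = 0 ∧ w = 0)) :
    ∃ p1 p2 q1 q2, (p1 ≠ 0 ∨ p2 ≠ 0) ∧ (q1 ≠ 0 ∨ q2 ≠ 0) ∧
      x = p1*q1 ∧ y = p2*q2 ∧ z = -(p1*q2) ∧ w = p2*q1 := by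
  by_cases hx : x ≠ 0
  · exact ⟨x, w, 1, -z/x, Or.inl hx, Or.inl one_ne_zero, by ring, by field_simp; linarith,
      by field_simp, by ring⟩
  push_neg at hx
  by_cases hy : y ≠ 0
  · exact ⟨-z, y, w/y, 1, Or.inr hy, Or.inr one_ne_zero, by field_simp; linarith,
      by ring, by ring, by field_simp⟩
  push_neg at hy
  by_cases hz : z ≠ 0
  · exact ⟨-z, y, -x/z, 1, Or.inl (neg_ne_zero.mpr hz), Or.inr one_ne_zero,
      by field_simp, by ring, by ring, by field_simp; linarith⟩
  push_neg at hz
  by_cases hw : w ≠ 0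
  · exact ⟨x, w, 1, y/w, Or.inr hw, Or.inl one_ne_zero, by ring, by field_simp,
      by field_simp; linarith, by ring⟩
  push_neg at hw
  exact absurd ⟨hx, hy, hz, hw⟩ hnz

lemma nIndep_pair {u v : V} (h : ∀ s t : ℝ, s • u + t • v = 0 → s = 0 ∧ t = 0) :
    LinearIndependent ℝ ![u, v] :=
  LinearIndependent.pair_iff.mpr h

lemma finrank_span_pair_s5 {u v : V} (h : LinearIndependent ℝ ![u, v]) :
    finrank ℝ (Submodule.span ℝ {u, v} : Submodule ℝ V) = 2 := by
  have hr : Set.range ![u, v] = {u, v} := by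
    rw [Matrix.range_cons, Matrix.range_cons_empty]
    rfl
  have := finrank_span_eq_card h
  rw [hr] at this
  simpa using this

variable (g : V →ₗ[ℝ] V →ₗ[ℝ] ℝ) (e : Basis (Fin 4) ℝ V)
variable (horth : ∀ i j, i ≠ j → g (e i) (e j) = 0)
variable (h0 : g (e 0) (e 0) = 1) (h1 : g (e 1) (e 1) = 1)
variable (h2 : g (e 2) (e 2) = -1) (h3 : g (e 3) (e 3) = -1)

include horth h0 h1 h2 h3 in
lemma g_nCombo (a b c d a' b' c' d' : ℝ) :
    g (nCombo e a b c d) (nCombo e a' b' c' d') = a*a'+b*b'-c*c'-d*d' := by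
  simp only [nCombo, map_add, map_smul, LinearMap.add_apply, LinearMap.smul_apply, smul_eq_mul,
    h0, h1, h2, h3,
    horth 0 1 (by decide), horth 0 2 (by decide), horth 0 3 (by decide),
    horth 1 0 (by decide), horth 1 2 (by decide), horth 1 3 (by decide),
    horth 2 0 (by decide), horth 2 1 (by decide), horth 2 3 (by decide),
    horth 3 0 (by decide), horth 3 1 (by decide), horth 3 2 (by decide)]
  ring

include horth h0 h1 h2 h3 in
lemma g_nOuter (p1 p2 q1 q2 r1 r2 s1 s2 : ℝ) :
    g (nOuter e p1 p2 q1 q2) (nOuter e r1 r2 s1 s2) =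
      ((p1*r2 - p2*r1) * (q1*s2 - q2*s1))/2 := by
  rw [nOuter, nOuter, g_nCombo g e horth h0 h1 h2 h3]
  ring

include horth h0 h1 h2 h3 in
lemma null_decomp {v : V} (hv : v ≠ 0) (hnull : g v v = 0) :
    ∃ p1 p2 q1 q2, (p1 ≠ 0 ∨ p2 ≠ 0) ∧ (q1 ≠ 0 ∨ q2 ≠ 0) ∧ v = nOuter e p1 p2 q1 q2 := by
  set a := e.repr v 0 with ha
  set b := e.repr v 1 with hb
  set c := e.repr v 2 with hc
  set d := e.repr v 3 with hd
  have hv' : v = nCombo e a b c d := nCombo_repr e v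
  have hnull' : a*a+b*b-c*c-d*d = 0 := by
    rw [hv', g_nCombo g e horth h0 h1 h2 h3] at hnull; exact hnull
  have hdet : (a+c)*(a-c) + (b+d)*(b-d) = 0 := by linear_combination hnull'
  have hnz : ¬((a+c) = 0 ∧ (a-c) = 0 ∧ (b+d) = 0 ∧ (b-d) = 0) := by
    rintro ⟨e1, e2, e3, e4⟩
    apply hv
    rw [hv']
    have hA : a = 0 := by linarith
    have hB : b = 0 := by linarith
    have hC : c = 0 := by linarith
    have hD : d = 0 := by linarith
    simp [nCombo, hA, hB, hC, hD]
  obtain ⟨p1, p2, q1, q2, hp, hq, hx, hy, hz, hw⟩ := nOp hdet hnz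
  refine ⟨p1, p2, q1, q2, hp, hq, ?_⟩
  rw [hv']
  have e1 : a = (p1*q1+p2*q2)/2 := by linarith
  have e2 : b = (p2*q1-p1*q2)/2 := by linarith
  have e3 : c = (p1*q1-p2*q2)/2 := by linarith
  have e4 : d = (-(p1*q2)-p2*q1)/2 := by linarith
  rw [nOuter, e1, e2, e3, e4]

end NullPlaneAux

/-- Through every nonzero null vector of a 4-dimensional real vector space with a
neutral scalar product there pass exactly two 2-dimensional totally isotropic
subspaces (one self-dual `α`-plane and one anti-self-dual `β`-plane). -/
theorem two_null_planes_through_null_vector {V : Type*} [AddCommGroup V] [Module ℝ V]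
    (g : V →ₗ[ℝ] V →ₗ[ℝ] ℝ) (hg : IsNeutral g)
    (X : V) (hX : X ≠ 0) (hXnull : g X X = 0) :
    ∃ W₁ W₂ : Submodule ℝ V, W₁ ≠ W₂ ∧
      (IsNullPlane g W₁ ∧ X ∈ W₁) ∧
      (IsNullPlane g W₂ ∧ X ∈ W₂) ∧
      ∀ W : Submodule ℝ V, IsNullPlane g W → X ∈ W → W = W₁ ∨ W = W₂ := by
  obtain ⟨e, horth, h0, h1, h2, h3⟩ := hg
  haveI : FiniteDimensional ℝ V := Module.Finite.of_basis e
  obtain ⟨p1, p2, q1, q2, hp, hq, hXeq⟩ :=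
    null_decomp g e horth h0 h1 h2 h3 hX hXnull
  set W₁ : Submodule ℝ V :=
    Submodule.span ℝ {nOuter e p1 p2 1 0, nOuter e p1 p2 0 1} with hW₁def
  set W₂ : Submodule ℝ V :=
    Submodule.span ℝ {nOuter e 1 0 q1 q2, nOuter e 0 1 q1 q2} with hW₂def
  -- membership of all `nOuter p ·` in `W₁` and `nOuter · q` in `W₂`
  have memW₁ : ∀ s t : ℝ, nOuter e p1 p2 s t ∈ W₁ := fun s t =>
    Submodule.mem_span_pair.mpr ⟨s, t, nOuter_qcomb e p1 p2 s t⟩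
  have memW₂ : ∀ s t : ℝ, nOuter e s t q1 q2 ∈ W₂ := fun s t =>
    Submodule.mem_span_pair.mpr ⟨s, t, nOuter_pcomb e q1 q2 s t⟩
  have hXW₁ : X ∈ W₁ := hXeq ▸ memW₁ q1 q2
  have hXW₂ : X ∈ W₂ := hXeq ▸ memW₂ p1 p2
  -- finranks
  have hW₁rank : finrank ℝ W₁ = 2 := by
    apply finrank_span_pair_s5
    apply nIndep_pair
    intro s t hst
    rw [nOuter_qcomb] at hst
    obtain ⟨e1, e2, e3, e4⟩ := nOuter_eq_zero e hst
    rcases hp with hp | hp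
    · exact ⟨(mul_eq_zero.mp e1).resolve_left hp, (mul_eq_zero.mp e3).resolve_left hp⟩
    · exact ⟨(mul_eq_zero.mp e4).resolve_left hp, (mul_eq_zero.mp e2).resolve_left hp⟩
  have hW₂rank : finrank ℝ W₂ = 2 := by
    apply finrank_span_pair_s5
    apply nIndep_pair
    intro s t hst
    rw [nOuter_pcomb] at hst
    obtain ⟨e1, e2, e3, e4⟩ := nOuter_eq_zero e hst
    rcases hq with hq | hq
    · exact ⟨(mul_eq_zero.mp e1).resolve_right hq, (mul_eq_zero.mp e4).resolve_right hq⟩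
    · exact ⟨(mul_eq_zero.mp e3).resolve_right hq, (mul_eq_zero.mp e2).resolve_right hq⟩
  -- isotropy
  have hW₁iso : ∀ u ∈ W₁, ∀ v ∈ W₁, g u v = 0 := by
    intro u hu v hv
    obtain ⟨a, b, hab⟩ := Submodule.mem_span_pair.mp hu
    obtain ⟨c, d, hcd⟩ := Submodule.mem_span_pair.mp hv
    rw [← hab, ← hcd, nOuter_qcomb, nOuter_qcomb, g_nOuter g e horth h0 h1 h2 h3]
    ring
  have hW₂iso : ∀ u ∈ W₂, ∀ v ∈ W₂, g u v = 0 := by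
    intro u hu v hv
    obtain ⟨a, b, hab⟩ := Submodule.mem_span_pair.mp hu
    obtain ⟨c, d, hcd⟩ := Submodule.mem_span_pair.mp hv
    rw [← hab, ← hcd, nOuter_pcomb, nOuter_pcomb, g_nOuter g e horth h0 h1 h2 h3]
    ring
  -- distinctness
  have hne : W₁ ≠ W₂ := by
    intro hEq
    have hm1 : nOuter e p1 p2 1 0 ∈ W₂ := hEq ▸ Submodule.subset_span (by simp)
    have hm2 : nOuter e p1 p2 0 1 ∈ W₂ := hEq ▸ Submodule.subset_span (by simp)
    obtain ⟨a, b, hab⟩ := Submodule.mem_span_pair.mp hm1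
    obtain ⟨a', b', hab'⟩ := Submodule.mem_span_pair.mp hm2
    rw [nOuter_pcomb] at hab hab'
    obtain ⟨e1, e2, e3, e4⟩ := nOuter_inj e hab
    obtain ⟨f1, f2, f3, f4⟩ := nOuter_inj e hab'
    rcases hq with hq | hq
    · -- q1 ≠ 0 : use second membership
      have ha' : a' = 0 := by
        have : a' * q1 = 0 := by linarith
        exact (mul_eq_zero.mp this).resolve_right hq
      have hb' : b' = 0 := by
        have : b' * q1 = 0 := by linarith
        exact (mul_eq_zero.mp this).resolve_right hq
      have : p1 = 0 := by
        have := f3; rw [ha'] at this; simpa using this.symm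
      have : p2 = 0 := by
        have := f2; rw [hb'] at this; simpa using this.symm
      rcases hp with hp | hp <;> simp_all
    · -- q2 ≠ 0 : use first membership
      have ha : a = 0 := by
        have : a * q2 = 0 := by linarith
        exact (mul_eq_zero.mp this).resolve_right hq
      have hb : b = 0 := by
        have : b * q2 = 0 := by linarith
        exact (mul_eq_zero.mp this).resolve_right hq
      have : p1 = 0 := by
        have := e1; rw [ha] at this; simpa using this.symm
      have : p2 = 0 := by
        have := e4; rw [hb] at this; simpa using this.symm
      rcases hp with hp | hp <;> simp_all
  refine ⟨W₁, W₂, hne, ⟨⟨hW₁rank, hW₁iso⟩, hXW₁⟩, ⟨⟨hW₂rank, hW₂iso⟩, hXW₂⟩, ?_⟩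
  -- uniqueness
  intro W hW hXW
  obtain ⟨hWrank, hWiso⟩ := hW
  have hXle : Submodule.span ℝ {X} ≤ W := by
    rw [Submodule.span_singleton_le_iff_mem]; exact hXW
  have hXfr : finrank ℝ (Submodule.span ℝ {X} : Submodule ℝ V) = 1 :=
    finrank_span_singleton hX
  have hlt : Submodule.span ℝ {X} < W := by
    rcases lt_or_eq_of_le hXle with h | h
    · exact h
    · exfalso; rw [h, hWrank] at hXfr; norm_num at hXfr
  obtain ⟨Y, hYW, hYnot⟩ := SetLike.exists_of_lt hlt
  have hY0 : Y ≠ 0 := by rintro rfl; exact hYnot (Submodule.zero_mem _)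
  have hYnull : g Y Y = 0 := hWiso Y hYW Y hYW
  have hXY : g X Y = 0 := hWiso X hXW Y hYW
  obtain ⟨r1, r2, s1, s2, hr, hs, hYeq⟩ :=
    null_decomp g e horth h0 h1 h2 h3 hY0 hYnull
  -- W = span {X, Y}
  have hpairle : Submodule.span ℝ {X, Y} ≤ W := by
    rw [Submodule.span_le]
    rintro z hz
    rcases hz with rfl | rfl
    · exact hXW
    · exact hYW
  have hXltpair : Submodule.span ℝ {X} < Submodule.span ℝ {X, Y} := by
    rw [SetLike.lt_iff_le_and_exists]
    refine ⟨Submodule.span_mono (by simp), Y, Submodule.subset_span (by simp), hYnot⟩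
  have hpairfr : finrank ℝ (Submodule.span ℝ {X, Y} : Submodule ℝ V) = 2 := by
    have hlt2 := Submodule.finrank_lt_finrank_of_lt hXltpair
    have hle2 := Submodule.finrank_mono hpairle
    rw [hXfr] at hlt2
    rw [hWrank] at hle2
    omega
  have hWpair : Submodule.span ℝ {X, Y} = W :=
    Submodule.eq_of_le_of_finrank_le hpairle (by rw [hWrank, hpairfr])
  -- analyze g X Y
  rw [hXeq, hYeq, g_nOuter g e horth h0 h1 h2 h3] at hXY
  have hprod : (p1*r2 - p2*r1) * (q1*s2 - q2*s1) = 0 := by linarith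
  rcases mul_eq_zero.mp hprod with hc | hc
  · left
    obtain ⟨t, ht1, ht2⟩ := nProp hp hc
    have hYW₁ : Y ∈ W₁ := by
      rw [hYeq, ht1, ht2, nOuter_smul_left]
      exact Submodule.smul_mem _ _ (memW₁ s1 s2)
    have hle : Submodule.span ℝ {X, Y} ≤ W₁ := by
      rw [Submodule.span_le]
      rintro z hz
      rcases hz with rfl | rfl
      · exact hXW₁
      · exact hYW₁
    have : Submodule.span ℝ {X, Y} = W₁ :=
      Submodule.eq_of_le_of_finrank_le hle (by rw [hW₁rank, hpairfr])
    rw [← hWpair, this]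
  · right
    obtain ⟨t, ht1, ht2⟩ := nProp hq hc
    have hYW₂ : Y ∈ W₂ := by
      rw [hYeq, ht1, ht2, nOuter_smul_right]
      exact Submodule.smul_mem _ _ (memW₂ r1 r2)
    have hle : Submodule.span ℝ {X, Y} ≤ W₂ := by
      rw [Submodule.span_le]
      rintro z hz
      rcases hz with rfl | rfl
      · exact hXW₂
      · exact hYW₂
    have : Submodule.span ℝ {X, Y} = W₂ :=
      Submodule.eq_of_le_of_finrank_le hle (by rw [hW₂rank, hpairfr])
    rw [← hWpair, this]
end
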